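/- Let n, d be positive integers with d ≤ n. Let H ∈ ℂ^{n×n} be Hermitian with eigenvalue decomposition H = Σ_{j=1}^n λ_j u_j u_jᴴ, where λ_1 ≥ λ_2 ≥ … ≥ λ_n are the eigenvalues arranged in nonincreasing order and u_1, …, u_n are corresponding orthonormal eigenvectors. Suppose γ ∈ ℝ satisfies Σ_{j=1}^d max(λ_j − γ, 0) = n. Define G* = Σ_{j=1}^d max(λ_j − γ, 0) · u_j u_jᴴ. Then G* is positive semidefinite, rank(G*) ≤ d, trace(G*) = n, and for every positive semidefinite matrix G ∈ ℂ^{n×n} with rank(G) ≤ d and trace(G) = n one has ‖G* − H‖_F ≤ ‖G − H‖_F. -/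

import Mathlib

open scoped Matrix ComplexOrder

/-- The Frobenius norm of a complex matrix: `‖A‖_F = (trace(AᴴA))^{1/2}
= (∑ᵢⱼ |Aᵢⱼ|²)^{1/2}`. -/
noncomputable def frobNorm {m n : Type*} [Fintype m] [Fintype n]
    (A : Matrix m n ℂ) : ℝ :=
  Real.sqrt (∑ i, ∑ j, ‖A i j‖ ^ 2)

section AuxNSC
open Matrix

noncomputable def frobSq {n : Type*} [Fintype n] (A : Matrix n n ℂ) : ℝ :=
  ∑ i, ∑ j, ‖A i j‖ ^ 2

lemma conj_mul_self_eq (z : ℂ) : star z * z = ((‖z‖^2 : ℝ) : ℂ) := by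
  rw [mul_comm]
  rw [show star z = (starRingEnd ℂ) z from rfl, Complex.mul_conj]
  norm_cast
  rw [Complex.normSq_eq_norm_sq]

lemma frobSq_eq_retrace {n : Type*} [Fintype n] (A : Matrix n n ℂ) :
    frobSq A = (Matrix.trace (Aᴴ * A)).re := by
  have h1 : Matrix.trace (Aᴴ * A) = ∑ j, ∑ i, ((‖A i j‖^2 : ℝ) : ℂ) := by
    simp only [Matrix.trace, Matrix.diag_apply, Matrix.mul_apply, Matrix.conjTranspose_apply,
      conj_mul_self_eq]
  rw [h1]
  simp only [← Complex.ofReal_sum, Complex.ofReal_re]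
  unfold frobSq
  exact Finset.sum_comm

lemma frobSq_conj {n : Type*} [Fintype n] [DecidableEq n] (U A : Matrix n n ℂ)
    (hU2 : U * Uᴴ = 1) (hU1 : Uᴴ * U = 1) : frobSq (U * A * Uᴴ) = frobSq A := by
  rw [frobSq_eq_retrace, frobSq_eq_retrace]
  have e1 : (U * A * Uᴴ)ᴴ * (U * A * Uᴴ) = U * Aᴴ * ((Uᴴ * U) * (A * Uᴴ)) := by
    simp only [Matrix.conjTranspose_mul, Matrix.conjTranspose_conjTranspose, Matrix.mul_assoc]
  rw [e1, hU1, Matrix.one_mul, Matrix.trace_mul_comm]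
  have e2 : A * Uᴴ * (U * Aᴴ) = A * ((Uᴴ * U) * Aᴴ) := by simp only [Matrix.mul_assoc]
  rw [e2, hU1, Matrix.one_mul, Matrix.trace_mul_comm]

lemma frobSq_diagonal {n : Type*} [Fintype n] [DecidableEq n] (w : n → ℂ) :
    frobSq (Matrix.diagonal w) = ∑ i, ‖w i‖^2 := by
  unfold frobSq
  refine Finset.sum_congr rfl fun i _ => ?_
  rw [Finset.sum_eq_single i]
  · simp
  · intro j _ hj
    rw [Matrix.diagonal_apply_ne _ (Ne.symm hj)]
    simp
  · simp

lemma frobSq_sub_diag {n : ℕ} (B : Matrix (Fin n) (Fin n) ℂ) (l : Fin n → ℝ) :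
    frobSq (B - Matrix.diagonal (fun i => ((l i : ℝ) : ℂ)))
      = frobSq B - 2 * ∑ i, l i * (B i i).re + ∑ i, l i ^ 2 := by
  have key : ∀ (z : ℂ) (r : ℝ), ‖z - (r:ℂ)‖^2 = ‖z‖^2 - 2*r*z.re + r^2 := by
    intro z r
    simp only [Complex.sq_norm, Complex.normSq_apply, Complex.sub_re,
      Complex.sub_im, Complex.ofReal_re, Complex.ofReal_im, sub_zero]
    ring
  have h : ∀ i j : Fin n, ‖(B - Matrix.diagonal (fun i => ((l i : ℝ) : ℂ))) i j‖^2
      = ‖B i j‖^2 - (if i = j then 2*(l i * (B i j).re) else 0)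
        + (if i = j then l i ^2 else 0) := by
    intro i j
    by_cases hij : i = j
    · subst hij
      simp only [Matrix.sub_apply, Matrix.diagonal_apply_eq, if_pos rfl]
      rw [key]; simp; ring
    · simp only [Matrix.sub_apply, Matrix.diagonal_apply_ne _ hij, if_neg hij, sub_zero, add_zero]
  have h2 : ∀ i : Fin n, ∑ j, ‖(B - Matrix.diagonal (fun i => ((l i : ℝ) : ℂ))) i j‖^2
      = (∑ j, ‖B i j‖^2) - 2*(l i * (B i i).re) + l i ^2 := by
    intro i
    rw [Finset.sum_congr rfl fun j _ => h i j, Finset.sum_add_distrib, Finset.sum_sub_distrib,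
      Finset.sum_ite_eq, Finset.sum_ite_eq]
    simp
  unfold frobSq
  rw [Finset.sum_congr rfl fun i _ => h2 i, Finset.sum_add_distrib, Finset.sum_sub_distrib,
    Finset.mul_sum]

lemma ds_bound {n : ℕ} (lam μ : Fin n → ℝ) (hlam : Antitone lam) (hμ : Antitone μ)
    (S : Matrix (Fin n) (Fin n) ℝ) (hS : S ∈ doublyStochastic ℝ (Fin n)) :
    ∑ i, ∑ k, lam i * μ k * S i k ≤ ∑ i, lam i * μ i := by
  obtain ⟨w, hw0, hw1, hwsum⟩ := exists_eq_sum_perm_of_mem_doublyStochastic hS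
  have hSapply : ∀ i k, S i k = ∑ τ : Equiv.Perm (Fin n), w τ * (τ.permMatrix ℝ) i k := by
    intro i k
    rw [← hwsum]
    simp [Matrix.sum_apply]
  have hP : ∀ (τ : Equiv.Perm (Fin n)) i k, (τ.permMatrix ℝ) i k = if τ i = k then 1 else 0 := by
    intro τ i k
    simp [Equiv.Perm.permMatrix, PEquiv.toMatrix_apply, Equiv.toPEquiv_apply]
  have key : ∀ τ : Equiv.Perm (Fin n),
      ∑ i, ∑ k, w τ * (lam i * μ k * (τ.permMatrix ℝ) i k) = w τ * ∑ i, lam i * μ (τ i) := by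
    intro τ
    rw [Finset.mul_sum]
    refine Finset.sum_congr rfl fun i _ => ?_
    rw [← Finset.mul_sum]
    congr 1
    calc ∑ k, lam i * μ k * (τ.permMatrix ℝ) i k
        = ∑ k, (if τ i = k then lam i * μ k else 0) := by
          refine Finset.sum_congr rfl fun k _ => ?_
          rw [hP]
          split_ifs <;> ring
      _ = lam i * μ (τ i) := by rw [Finset.sum_ite_eq]; simp
  calc ∑ i, ∑ k, lam i * μ k * S i k
      = ∑ i, ∑ k, ∑ τ : Equiv.Perm (Fin n), w τ * (lam i * μ k * (τ.permMatrix ℝ) i k) := by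
        refine Finset.sum_congr rfl fun i _ => Finset.sum_congr rfl fun k _ => ?_
        rw [hSapply, Finset.mul_sum]
        exact Finset.sum_congr rfl fun τ _ => by ring
    _ = ∑ i, ∑ τ : Equiv.Perm (Fin n), ∑ k, w τ * (lam i * μ k * (τ.permMatrix ℝ) i k) :=
        Finset.sum_congr rfl fun i _ => Finset.sum_comm
    _ = ∑ τ : Equiv.Perm (Fin n), ∑ i, ∑ k, w τ * (lam i * μ k * (τ.permMatrix ℝ) i k) :=
        Finset.sum_comm
    _ = ∑ τ : Equiv.Perm (Fin n), w τ * ∑ i, lam i * μ (τ i) :=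
        Finset.sum_congr rfl fun τ _ => key τ
    _ ≤ ∑ τ : Equiv.Perm (Fin n), w τ * ∑ i, lam i * μ i := by
        refine Finset.sum_le_sum fun τ _ => mul_le_mul_of_nonneg_left ?_ (hw0 τ)
        exact (hlam.monovary hμ).sum_mul_comp_perm_le_sum_mul
    _ = ∑ i, lam i * μ i := by rw [← Finset.sum_mul, hw1, one_mul]

lemma proj_ineq {n d : ℕ} (γ : ℝ) (lam μ t : Fin n → ℝ)
    (ht : ∀ i : Fin n, t i = if (i:ℕ) < d then max (lam i - γ) 0 else 0)
    (hμ0 : ∀ i, 0 ≤ μ i) (hμd : ∀ i : Fin n, d ≤ (i:ℕ) → μ i = 0)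
    (hsum : ∑ i, μ i = ∑ i, t i) :
    ∑ i, (t i - lam i)^2 ≤ ∑ i, (μ i - lam i)^2 := by
  have key : ∀ i, (t i - lam i)^2 - 2*γ*(μ i - t i) ≤ (μ i - lam i)^2 := by
    intro i
    rcases lt_or_ge (i:ℕ) d with h | h
    · rw [ht i, if_pos h]
      rcases le_or_gt γ (lam i) with h2 | h2
      · rw [max_eq_left (by linarith)]
        nlinarith [sq_nonneg (μ i - (lam i - γ))]
      · rw [max_eq_right (by linarith)]
        nlinarith [mul_nonneg (hμ0 i) (sub_nonneg.mpr h2.le), sq_nonneg (μ i)]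
    · rw [ht i, if_neg (not_lt.mpr h), hμd i h]
      nlinarith
  have hz : ∑ i, ((t i - lam i)^2 - 2*γ*(μ i - t i)) = ∑ i, (t i - lam i)^2 := by
    rw [Finset.sum_sub_distrib]
    have h0 : ∑ i, 2*γ*(μ i - t i) = 0 := by
      rw [← Finset.mul_sum, Finset.sum_sub_distrib, hsum, sub_self, mul_zero]
    rw [h0, sub_zero]
  rw [← hz]
  exact Finset.sum_le_sum fun i _ => key i

end AuxNSC

/-- **Projection onto the spectral constraint set.**  Let `H = ∑ⱼ λⱼ uⱼ uⱼᴴ` be a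
Hermitian `n × n` matrix with nonincreasing eigenvalues `λ` and orthonormal
eigenvectors `u`.  If `γ` satisfies `∑_{j<d} (λⱼ − γ)₊ = n`, then
`G* = ∑_{j<d} (λⱼ − γ)₊ uⱼ uⱼᴴ` is positive semidefinite, has rank at most `d` and
trace `n`, and minimizes the Frobenius distance to `H` over all positive-semidefinite
matrices of rank at most `d` and trace `n`. -/
theorem nearest_spectral_constraint (n d : ℕ) (hn : 0 < n) (hd : 0 < d) (hdn : d ≤ n)
    (lam : Fin n → ℝ) (hlam : Antitone lam)
    (u : Fin n → Fin n → ℂ)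
    (hu : ∀ j k : Fin n, (∑ i, star (u j i) * u k i) = if j = k then (1 : ℂ) else 0)
    (H : Matrix (Fin n) (Fin n) ℂ)
    (hH : H = ∑ j, ((lam j : ℝ) : ℂ) • Matrix.vecMulVec (u j) (star (u j)))
    (γ : ℝ)
    (hγ : ∑ j ∈ Finset.univ.filter (fun j : Fin n => (j : ℕ) < d),
      max (lam j - γ) 0 = (n : ℝ))
    (Gstar : Matrix (Fin n) (Fin n) ℂ)
    (hGstar : Gstar = ∑ j ∈ Finset.univ.filter (fun j : Fin n => (j : ℕ) < d),
      ((max (lam j - γ) 0 : ℝ) : ℂ) • Matrix.vecMulVec (u j) (star (u j))) :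
    Gstar.PosSemidef ∧ Gstar.rank ≤ d ∧ Gstar.trace = (n : ℂ) ∧
      ∀ G : Matrix (Fin n) (Fin n) ℂ,
        G.PosSemidef → G.rank ≤ d → G.trace = (n : ℂ) →
        frobNorm (Gstar - H) ≤ frobNorm (G - H) := by
  classical
  -- the unitary with columns u j
  set U : Matrix (Fin n) (Fin n) ℂ := Matrix.of fun i j => u j i with hUdef
  have hU1 : Uᴴ * U = 1 := by
    ext j k
    simp only [Matrix.mul_apply, Matrix.conjTranspose_apply, hUdef, Matrix.of_apply,
      Matrix.one_apply]
    exact hu j k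
  have hU2 : U * Uᴴ = 1 := mul_eq_one_comm.mp hU1
  have hrep : ∀ w : Fin n → ℝ, U * Matrix.diagonal (fun j => ((w j : ℝ) : ℂ)) * Uᴴ
      = ∑ j, ((w j : ℝ) : ℂ) • Matrix.vecMulVec (u j) (star (u j)) := by
    intro w
    ext i k
    rw [Matrix.mul_apply]
    simp only [Matrix.mul_diagonal, Matrix.conjTranspose_apply, hUdef, Matrix.of_apply,
      Matrix.sum_apply, Matrix.smul_apply, Matrix.vecMulVec_apply, Pi.star_apply, smul_eq_mul]
    exact Finset.sum_congr rfl fun j _ => by ring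
  have hHU : H = U * Matrix.diagonal (fun j => ((lam j : ℝ) : ℂ)) * Uᴴ := by
    rw [hH, hrep]
  set t : Fin n → ℝ := fun j => if (j:ℕ) < d then max (lam j - γ) 0 else 0 with htdef
  have hGU : Gstar = U * Matrix.diagonal (fun j => ((t j : ℝ) : ℂ)) * Uᴴ := by
    rw [hrep t, hGstar, Finset.sum_filter]
    refine Finset.sum_congr rfl fun j _ => ?_
    by_cases h : (j:ℕ) < d
    · simp [htdef, if_pos h]
    · simp [htdef, if_neg h]
  have ht0 : ∀ j, 0 ≤ t j := by
    intro j
    rw [htdef]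
    dsimp only
    split_ifs
    · exact le_max_right _ _
    · exact le_rfl
  have htsum : ∑ j, t j = (n:ℝ) := by
    rw [← hγ, Finset.sum_filter]
  -- Part 1 : PSD
  have hpsd : Gstar.PosSemidef := by
    rw [hGU]
    exact (Matrix.posSemidef_diagonal_iff.mpr
      (fun i => Complex.zero_le_real.mpr (ht0 i))).mul_mul_conjTranspose_same U
  -- Part 2 : rank
  have hrank : Gstar.rank ≤ d := by
    rw [hGU]
    refine le_trans (le_trans (Matrix.rank_mul_le_left _ _) (Matrix.rank_mul_le_right _ _)) ?_
    rw [Matrix.rank_diagonal]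
    have htzero : ∀ j : Fin n, ¬((j:ℕ) < d) → ((t j : ℝ) : ℂ) = 0 := by
      intro j hj
      rw [htdef]
      simp [if_neg hj]
    have hinj : Function.Injective
        (fun x : {i : Fin n // ((t i : ℝ) : ℂ) ≠ 0} => (⟨(x.1 : ℕ), by
          by_contra hc
          exact x.2 (htzero x.1 hc)⟩ : Fin d)) := by
      intro x y hxy
      have h5 := congrArg (fun z : Fin d => (z : ℕ)) hxy
      exact Subtype.ext (Fin.ext h5)
    have := Fintype.card_le_of_injective _ hinj
    simpa using this
  -- Part 3 : trace
  have htr : Gstar.trace = (n:ℂ) := by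
    rw [hGU, Matrix.trace_mul_comm, ← Matrix.mul_assoc, hU1, Matrix.one_mul,
      Matrix.trace_diagonal]
    rw [← Complex.ofReal_sum]
    exact_mod_cast congrArg (Complex.ofReal) htsum
  refine ⟨hpsd, hrank, htr, ?_⟩
  -- Part 4 : optimality
  intro G hG hGrank hGtr
  set B : Matrix (Fin n) (Fin n) ℂ := Uᴴ * G * U with hBdef
  have hBpsd : B.PosSemidef := by
    have := hG.mul_mul_conjTranspose_same Uᴴ
    rw [Matrix.conjTranspose_conjTranspose] at this
    exact this
  have hBher : B.IsHermitian := hBpsd.1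
  have hBtr : B.trace = (n:ℂ) := by
    rw [hBdef, Matrix.trace_mul_comm, ← Matrix.mul_assoc, hU2, Matrix.one_mul, hGtr]
  have hBrank : B.rank ≤ d :=
    le_trans (le_trans (Matrix.rank_mul_le_left _ _) (Matrix.rank_mul_le_right _ _)) hGrank
  have hGB : G = U * B * Uᴴ := by
    rw [hBdef]
    calc G = (U * Uᴴ) * G * (U * Uᴴ) := by rw [hU2, Matrix.one_mul, Matrix.mul_one]
    _ = U * (Uᴴ * G * U) * Uᴴ := by simp only [Matrix.mul_assoc]
  have hdiff : G - H = U * (B - Matrix.diagonal (fun j => ((lam j : ℝ) : ℂ))) * Uᴴ := by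
    rw [hGB, hHU]
    simp only [Matrix.mul_sub, Matrix.sub_mul]
  have e1 : frobSq (G - H) = frobSq (B - Matrix.diagonal (fun j => ((lam j : ℝ) : ℂ))) := by
    rw [hdiff, frobSq_conj U _ hU2 hU1]
  have e2 : frobSq (Gstar - H) = ∑ i, (t i - lam i)^2 := by
    have hδ : Gstar - H = U * Matrix.diagonal (fun j => ((t j - lam j : ℝ) : ℂ)) * Uᴴ := by
      rw [hGU, hHU]
      have hfun : (fun j : Fin n => ((t j - lam j : ℝ) : ℂ))
          = fun j : Fin n => ((t j : ℝ) : ℂ) - ((lam j : ℝ) : ℂ) := by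
        funext j
        simp [Complex.ofReal_sub]
      rw [hfun, ← Matrix.diagonal_sub]
      simp only [Matrix.mul_sub, Matrix.sub_mul]
    rw [hδ, frobSq_conj U _ hU2 hU1, frobSq_diagonal]
    refine Finset.sum_congr rfl fun i _ => ?_
    rw [Complex.norm_real]
    exact sq_abs _
  -- spectral decomposition of B
  set μ0 : Fin n → ℝ := hBher.eigenvalues with hμ0def
  set V : Matrix (Fin n) (Fin n) ℂ := (hBher.eigenvectorUnitary : Matrix (Fin n) (Fin n) ℂ)
    with hVdef
  have hV1 : Vᴴ * V = 1 := by
    simpa [Matrix.star_eq_conjTranspose] using (Unitary.mem_iff.mp hBher.eigenvectorUnitary.2).1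
  have hV2 : V * Vᴴ = 1 := mul_eq_one_comm.mp hV1
  have hspec : B = V * Matrix.diagonal (fun k => ((μ0 k : ℝ) : ℂ)) * Vᴴ := by
    exact hBher.spectral_theorem
  have hμ0nonneg : ∀ k, 0 ≤ μ0 k := hBpsd.eigenvalues_nonneg
  have hμ0sum : ∑ k, μ0 k = (n:ℝ) := by
    have h1 : B.trace = ∑ k, ((μ0 k : ℝ) : ℂ) := by
      conv_lhs => rw [hspec]
      rw [Matrix.trace_mul_comm, ← Matrix.mul_assoc, hV1, Matrix.one_mul, Matrix.trace_diagonal]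
    rw [hBtr] at h1
    exact_mod_cast h1.symm
  have hfB : frobSq B = ∑ k, μ0 k ^ 2 := by
    conv_lhs => rw [hspec]
    rw [frobSq_conj V _ hV2 hV1, frobSq_diagonal]
    refine Finset.sum_congr rfl fun k _ => ?_
    rw [Complex.norm_real]
    exact sq_abs _
  have hBdiag : ∀ i, (B i i).re = ∑ k, μ0 k * ‖V i k‖^2 := by
    intro i
    have h1 : B i i = ∑ k, ((μ0 k * ‖V i k‖^2 : ℝ) : ℂ) := by
      conv_lhs => rw [hspec]
      rw [Matrix.mul_apply]
      simp only [Matrix.mul_diagonal, Matrix.conjTranspose_apply]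
      refine Finset.sum_congr rfl fun k _ => ?_
      rw [mul_comm (V i k) _, mul_assoc,
        show star (V i k) = (starRingEnd ℂ) (V i k) from rfl, Complex.mul_conj]
      rw [Complex.ofReal_mul]
      congr 1
      rw [Complex.normSq_eq_norm_sq]
    rw [h1, ← Complex.ofReal_sum, Complex.ofReal_re]
  -- sorted eigenvalues
  set e : Equiv.Perm (Fin n) := (Fin.revPerm).trans (Tuple.sort μ0) with hedef
  set μ : Fin n → ℝ := fun i => μ0 (e i) with hμdef
  have hμanti : Antitone μ := by
    intro i j hij
    have h := Tuple.monotone_sort μ0 (Fin.rev_le_rev.mpr hij)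
    simpa [hμdef, hedef, Equiv.trans_apply] using h
  have hμnonneg : ∀ i, 0 ≤ μ i := fun i => hμ0nonneg _
  have hμsum : ∑ i, μ i = (n:ℝ) := (Equiv.sum_comp e μ0).trans hμ0sum
  have hμsq : ∑ i, μ i ^ 2 = ∑ k, μ0 k ^ 2 := Equiv.sum_comp e (fun k => μ0 k ^ 2)
  have hμd : ∀ i : Fin n, d ≤ (i:ℕ) → μ i = 0 := by
    intro i hi
    by_contra hne
    have hpos : 0 < μ i := (hμnonneg i).lt_of_ne (Ne.symm hne)
    have hcard : d + 1 ≤ Fintype.card {k : Fin n // μ0 k ≠ 0} := by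
      have hjn : ∀ j : Fin (d+1), (j : ℕ) < n := fun j =>
        lt_of_le_of_lt (le_trans (Nat.le_of_lt_succ j.2) hi) i.2
      have hinj : Function.Injective (fun j : Fin (d+1) =>
          (⟨e ⟨(j:ℕ), hjn j⟩, by
            have hle : (⟨(j:ℕ), hjn j⟩ : Fin n) ≤ i := by
              simp only [Fin.le_def]
              exact le_trans (Nat.le_of_lt_succ j.2) hi
            have h2 : μ i ≤ μ ⟨(j:ℕ), hjn j⟩ := hμanti hle
            exact ne_of_gt (lt_of_lt_of_le hpos h2)⟩ : {k : Fin n // μ0 k ≠ 0})) := by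
        intro a b hab
        have h3 : e ⟨(a:ℕ), hjn a⟩ = e ⟨(b:ℕ), hjn b⟩ := congrArg Subtype.val hab
        have h4 := e.injective h3
        have h5 := congrArg (fun z : Fin n => (z : ℕ)) h4
        exact Fin.ext h5
      have := Fintype.card_le_of_injective _ hinj
      simpa using this
    rw [hBher.rank_eq_card_non_zero_eigs, ← hμ0def] at hBrank
    omega
  -- the doubly stochastic matrix
  set S : Matrix (Fin n) (Fin n) ℝ := Matrix.of fun i k => ‖V i (e k)‖^2 with hSdef
  have hrow : ∀ i, ∑ k, ‖V i k‖^2 = 1 := by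
    intro i
    have h1 : (V * Vᴴ) i i = 1 := by rw [hV2]; simp
    have h2 : (V * Vᴴ) i i = ∑ k, ((‖V i k‖^2 : ℝ) : ℂ) := by
      simp only [Matrix.mul_apply, Matrix.conjTranspose_apply]
      refine Finset.sum_congr rfl fun k _ => ?_
      rw [show star (V i k) = (starRingEnd ℂ) (V i k) from rfl, Complex.mul_conj]
      norm_cast
      rw [Complex.normSq_eq_norm_sq]
    rw [h2] at h1
    exact_mod_cast h1
  have hcol : ∀ k, ∑ i, ‖V i k‖^2 = 1 := by
    intro k
    have h1 : (Vᴴ * V) k k = 1 := by rw [hV1]; simp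
    have h2 : (Vᴴ * V) k k = ∑ i, ((‖V i k‖^2 : ℝ) : ℂ) := by
      simp only [Matrix.mul_apply, Matrix.conjTranspose_apply]
      refine Finset.sum_congr rfl fun i _ => ?_
      rw [show star (V i k) = (starRingEnd ℂ) (V i k) from rfl, mul_comm, Complex.mul_conj]
      norm_cast
      rw [Complex.normSq_eq_norm_sq]
    rw [h2] at h1
    exact_mod_cast h1
  have hSmem : S ∈ doublyStochastic ℝ (Fin n) := by
    rw [mem_doublyStochastic_iff_sum]
    refine ⟨fun i j => by rw [hSdef]; exact sq_nonneg _, fun i => ?_, fun k => ?_⟩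
    · rw [hSdef]
      exact (Equiv.sum_comp e (fun k => ‖V i k‖^2)).trans (hrow i)
    · rw [hSdef]
      exact hcol (e k)
  have hcross : ∑ i, lam i * (B i i).re ≤ ∑ i, lam i * μ i := by
    have h1 : ∑ i, lam i * (B i i).re = ∑ i, ∑ k, lam i * μ k * S i k := by
      refine Finset.sum_congr rfl fun i _ => ?_
      rw [hBdiag i, Finset.mul_sum,
        ← Equiv.sum_comp e (fun k => lam i * (μ0 k * ‖V i k‖^2))]
      refine Finset.sum_congr rfl fun k _ => ?_
      rw [hSdef, hμdef]
      dsimp only [Matrix.of_apply]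
      ring
    rw [h1]
    exact ds_bound lam μ hlam hμanti S hSmem
  -- final chain
  have main : frobSq (Gstar - H) ≤ frobSq (G - H) := by
    rw [e1, e2, frobSq_sub_diag B lam]
    have expand2 : ∑ i, (μ i - lam i)^2
        = (∑ k, μ0 k ^ 2) - 2 * ∑ i, lam i * μ i + ∑ i, lam i ^ 2 := by
      rw [← hμsq, Finset.mul_sum, ← Finset.sum_sub_distrib, ← Finset.sum_add_distrib]
      exact Finset.sum_congr rfl fun i _ => by ring
    have step1 : ∑ i, (t i - lam i)^2 ≤ ∑ i, (μ i - lam i)^2 :=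
      proj_ineq γ lam μ t (fun i => rfl) hμnonneg hμd (by rw [hμsum, htsum])
    have step2 : ∑ i, (μ i - lam i)^2
        ≤ frobSq B - 2 * ∑ i, lam i * (B i i).re + ∑ i, lam i ^ 2 := by
      rw [expand2, hfB]
      nlinarith [hcross]
    linarith
  have hfn : ∀ A : Matrix (Fin n) (Fin n) ℂ, frobNorm A = Real.sqrt (frobSq A) := fun A => rfl
  rw [hfn, hfn]
  exact Real.sqrt_le_sqrt main
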